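/- Let F = F_q be a finite field. The number of GL₂(F_q)-orbits on triples of 2×2 nilpotent matrices over F_q under simultaneous conjugation is q³ + q² + q + 1. -/

import Mathlib

open Matrix

namespace Stmt9

variable {F : Type*} [Field F]

abbrev M2 (F : Type*) [Field F] := Matrix (Fin 2) (Fin 2) F

def nu (x y : F) : M2 F := !![-(x*y), x*x; -(y*y), x*y]

lemma nu_mul (x y x' y' : F) :
    nu x y * nu x' y' = (x*y' - y*x') • !![-(x*y'), x*x'; -(y*y'), y*x'] := by
  ext i j
  fin_cases i <;> fin_cases j <;> simp [nu, Matrix.mul_apply, Fin.sum_univ_two] <;> ring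

lemma nu_mul_self (x y : F) : nu x y * nu x y = 0 := by
  have h : x*y - y*x = 0 := by ring
  rw [nu_mul, h, zero_smul]

lemma nu_smul_sq (s x y : F) : (s • nu x y) * (s • nu x y) = 0 := by
  rw [smul_mul_assoc, mul_smul_comm, nu_mul_self]; simp

lemma nu_scale (c x y : F) : nu (c*x) (c*y) = (c*c) • nu x y := by
  ext i j
  fin_cases i <;> fin_cases j <;> simp [nu] <;> ring

lemma nu_ne_zero {x y : F} (h : ¬(x = 0 ∧ y = 0)) : nu x y ≠ 0 := by
  intro h0
  apply h
  have hx := congrFun (congrFun h0 0) 1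
  have hy := congrFun (congrFun h0 1) 0
  simp [nu] at hx hy
  exact ⟨hx, hy⟩

lemma trace_nu_mul (x y x' y' : F) :
    Matrix.trace (nu x y * nu x' y') = -(x*y' - y*x')^2 := by
  rw [nu_mul]
  simp [Matrix.trace_fin_two]
  ring

lemma trace_nu_mul3 (x y x' y' x'' y'' : F) :
    Matrix.trace (nu x y * nu x' y' * nu x'' y'') =
      -((x*y' - y*x') * (x'*y'' - y'*x'') * (x*y'' - y*x'')) := by
  rw [nu_mul, smul_mul_assoc]
  simp only [nu, Matrix.mul_fin_two, Matrix.trace_fin_two, Matrix.smul_apply]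
  simp
  ring

lemma nil_struct {A : M2 F} (h : A * A = 0) :
    A = 0 ∨ ∃ s x y : F, s ≠ 0 ∧ ¬(x = 0 ∧ y = 0) ∧ A = s • nu x y := by
  set a := A 0 0 with ha
  set b := A 0 1 with hb
  set c := A 1 0 with hc
  set d := A 1 1 with hd
  have hA : A = !![a, b; c, d] := by
    ext i j; fin_cases i <;> fin_cases j <;> rfl
  rw [hA, Matrix.mul_fin_two] at h
  have h00 : a*a + b*c = 0 := by have := congrFun (congrFun h 0) 0; simpa using this
  have h01 : a*b + b*d = 0 := by have := congrFun (congrFun h 0) 1; simpa using this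
  have h11 : c*b + d*d = 0 := by have := congrFun (congrFun h 1) 1; simpa using this
  by_cases hb0 : b = 0
  · by_cases hc0 : c = 0
    · left
      have ha0 : a = 0 := by
        have : a * a = 0 := by rw [hb0] at h00; simpa using h00
        exact mul_self_eq_zero.mp this
      have hd0 : d = 0 := by
        have : d * d = 0 := by rw [hc0] at h11; simpa using h11
        exact mul_self_eq_zero.mp this
      rw [hA, ha0, hb0, hc0, hd0]
      ext i j; fin_cases i <;> fin_cases j <;> simp
    · right
      have ha0 : a = 0 := by
        have : a * a = 0 := by rw [hb0] at h00; simpa using h00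
        exact mul_self_eq_zero.mp this
      have hd0 : d = 0 := by
        have : d * d = 0 := by rw [hb0] at h11; simpa using h11
        exact mul_self_eq_zero.mp this
      refine ⟨-c, 0, 1, by simpa using hc0, by simp, ?_⟩
      rw [hA, ha0, hb0, hd0]
      ext i j; fin_cases i <;> fin_cases j <;> simp [nu]
  · right
    have hda : d = -a := by
      have : b * (a + d) = 0 := by linear_combination h01
      rcases mul_eq_zero.mp this with h' | h'
      · exact absurd h' hb0
      · linear_combination h'
    have hcba : c = -(a*a)/b := by
      field_simp
      linear_combination h00
    refine ⟨b, 1, -a/b, hb0, by simp, ?_⟩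
    rw [hA, hda, hcba]
    ext i j
    fin_cases i <;> fin_cases j <;> simp [nu] <;> field_simp <;> ring

def mkGL (a b c d : F) (h : a*d - b*c ≠ 0) : GL (Fin 2) F where
  val := !![a, b; c, d]
  inv := (a*d - b*c)⁻¹ • !![d, -b; -c, a]
  val_inv := by
    rw [Matrix.mul_smul, Matrix.mul_fin_two]
    have h2 : !![a*d + b*(-c), a*(-b) + b*a; c*d + d*(-c), c*(-b) + d*a]
        = (a*d - b*c) • (1 : M2 F) := by
      ext i j
      fin_cases i <;> fin_cases j <;> simp [Matrix.one_apply] <;> ring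
    rw [h2, smul_smul, inv_mul_cancel₀ h, one_smul]
  inv_val := by
    rw [Matrix.smul_mul, Matrix.mul_fin_two]
    have h2 : !![d*a + (-b)*c, d*b + (-b)*d; (-c)*a + a*c, (-c)*b + a*d]
        = (a*d - b*c) • (1 : M2 F) := by
      ext i j
      fin_cases i <;> fin_cases j <;> simp [Matrix.one_apply] <;> ring
    rw [h2, smul_smul, inv_mul_cancel₀ h, one_smul]

lemma mkGL_coe (a b c d : F) (h : a*d - b*c ≠ 0) :
    ((mkGL a b c d h : GL (Fin 2) F) : M2 F) = !![a, b; c, d] := rfl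

lemma conj_iff (g : GL (Fin 2) F) (A B : M2 F) :
    (g : M2 F) * A * (↑g⁻¹ : M2 F) = B
      ↔ (g : M2 F) * A = B * (g : M2 F) := by
  constructor
  · intro h
    rw [← h, Units.inv_mul_cancel_right]
  · intro h
    rw [h, Units.mul_inv_cancel_right]

lemma conj_main (x y x' y' t u s c1 c2 : F) (ht : t ≠ 0) (hu : u ≠ 0) :
    !![t*y', -(t*x'); -(u*y), u*x] * (s • nu (c1*x + c2*x') (c1*y + c2*y'))
      = ((s*(x*y' - y*x')/(t*u)) • nu (c1*t) (c2*u))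
          * !![t*y', -(t*x'); -(u*y), u*x] := by
  ext i j
  fin_cases i <;> fin_cases j <;>
    simp [nu, Matrix.mul_apply, Fin.sum_univ_two] <;> field_simp <;> ring

/-- the nilpotent triples -/
abbrev NT (F : Type*) [Field F] := {A : Fin 3 → M2 F // ∀ i, A i ^ 2 = 0}

def rel (A B : NT F) : Prop :=
  ∃ g : GL (Fin 2) F, ∀ i, (g : M2 F) * A.1 i * (↑g⁻¹ : M2 F) = B.1 i

lemma rel_refl (A : NT F) : rel A A := by
  refine ⟨1, fun i => ?_⟩
  simp

lemma rel_symm {A B : NT F} (h : rel A B) : rel B A := by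
  obtain ⟨g, hg⟩ := h
  refine ⟨g⁻¹, fun i => ?_⟩
  rw [conj_iff]
  have h := hg i
  rw [conj_iff] at h
  calc (↑g⁻¹ : M2 F) * B.1 i = ↑g⁻¹ * (B.1 i * ↑g) * ↑g⁻¹ := by
        rw [mul_assoc, Units.mul_inv_cancel_right]
    _ = ↑g⁻¹ * (↑g * A.1 i) * ↑g⁻¹ := by rw [h]
    _ = A.1 i * ↑g⁻¹ := by rw [← mul_assoc, Units.inv_mul, one_mul]

lemma rel_trans {A B C : NT F} (h1 : rel A B) (h2 : rel B C) : rel A C := by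
  obtain ⟨g, hg⟩ := h1
  obtain ⟨k, hk⟩ := h2
  refine ⟨k * g, fun i => ?_⟩
  have : ((k*g : GL (Fin 2) F) : M2 F) = (k : M2 F) * (g : M2 F) := rfl
  have hinv : (((k*g)⁻¹ : GL (Fin 2) F) : M2 F) = (↑g⁻¹ : M2 F) * (↑k⁻¹ : M2 F) := by
    rw [_root_.mul_inv_rev]; rfl
  rw [this, hinv, ← hk i, ← hg i]
  simp only [mul_assoc]


open scoped Classical

/-- ratio of two matrices, when Q = c • P gives c -/
noncomputable def ratio (P Q : M2 F) : F :=
  if P 0 0 ≠ 0 then Q 0 0 / P 0 0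
  else if P 0 1 ≠ 0 then Q 0 1 / P 0 1
  else if P 1 0 ≠ 0 then Q 1 0 / P 1 0
  else Q 1 1 / P 1 1

lemma ratio_eq {P Q : M2 F} (hP : P ≠ 0) {c : F} (h : Q = c • P) : ratio P Q = c := by
  have hent : ¬(P 0 0 = 0 ∧ P 0 1 = 0 ∧ P 1 0 = 0 ∧ P 1 1 = 0) := by
    rintro ⟨h1, h2, h3, h4⟩
    apply hP
    ext i j
    fin_cases i <;> fin_cases j <;> simpa
  rw [ratio]
  subst h
  by_cases h1 : P 0 0 = 0
  · rw [if_neg (by simpa using h1)]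
    by_cases h2 : P 0 1 = 0
    · rw [if_neg (by simpa using h2)]
      by_cases h3 : P 1 0 = 0
      · rw [if_neg (by simpa using h3)]
        have h4 : P 1 1 ≠ 0 := fun h4 => hent ⟨h1, h2, h3, h4⟩
        simp [Matrix.smul_apply]
        field_simp
      · rw [if_pos (by simpa using h3)]
        simp [Matrix.smul_apply]
        field_simp
    · rw [if_pos (by simpa using h2)]
      simp [Matrix.smul_apply]
      field_simp
  · rw [if_pos (by simpa using h1)]
    simp [Matrix.smul_apply]
    field_simp

/-- unit from a field element (1 if zero) -/
noncomputable def uu (x : F) : Fˣ :=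
  if h : x = 0 then 1 else Units.mk0 x h

lemma uu_coe {x : F} (h : x ≠ 0) : ((uu x : Fˣ) : F) = x := by
  rw [uu, dif_neg h]; rfl

lemma uu_unit (s : Fˣ) : uu ((s : F)) = s := by
  ext
  exact uu_coe s.ne_zero

/-- dependence from vanishing determinant -/
lemma dep {x y x' y' : F} (hv : ¬(x = 0 ∧ y = 0)) (hd : x*y' - y*x' = 0) :
    ∃ c, x' = c*x ∧ y' = c*y := by
  by_cases hx : x = 0
  · have hy : y ≠ 0 := fun hy => hv ⟨hx, hy⟩
    subst hx
    have hyx : y * x' = 0 := by linear_combination -hd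
    have hx' : x' = 0 := by
      rcases mul_eq_zero.mp hyx with h | h
      · exact absurd h hy
      · exact h
    exact ⟨y'/y, by rw [hx']; ring, by field_simp⟩
  · refine ⟨x'/x, by field_simp, ?_⟩
    field_simp
    linear_combination hd

/-- two nonzero square-zero matrices with zero product are proportional -/
lemma same_line_mult {P Q : M2 F} (hP2 : P*P = 0) (hQ2 : Q*Q = 0) (hP : P ≠ 0)
    (hPQ : P*Q = 0) : ∃ c : F, Q = c • P := by
  rcases nil_struct hP2 with h | ⟨s, x, y, hs, hv, hPe⟩
  · exact absurd h hP
  rcases nil_struct hQ2 with h | ⟨s', x', y', hs', hv', hQe⟩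
  · exact ⟨0, by rw [h]; simp⟩
  have hd : x*y' - y*x' = 0 := by
    by_contra hd
    rw [hPe, hQe, smul_mul_assoc, mul_smul_comm, nu_mul] at hPQ
    have := smul_eq_zero.mp (smul_eq_zero.mp hPQ |>.resolve_left hs) |>.resolve_left hs'
    have := smul_eq_zero.mp this |>.resolve_left hd
    by_cases hx : x = 0
    · have hy : y ≠ 0 := fun hy => hv ⟨hx, hy⟩
      have e1 := congrFun (congrFun this 1) 0
      have e2 := congrFun (congrFun this 1) 1
      simp at e1 e2
      exact hv' ⟨e2.resolve_left hy, e1.resolve_left (by simpa using hy)⟩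
    · have e1 := congrFun (congrFun this 0) 0
      have e2 := congrFun (congrFun this 0) 1
      simp at e1 e2
      refine hv' ⟨e2.resolve_left hx, ?_⟩
      rcases e1 with e | e
      · exact absurd e hx
      · exact e
  obtain ⟨c, hc1, hc2⟩ := dep hv hd
  refine ⟨s'*(c*c)/s, ?_⟩
  rw [hQe, hPe, hc1, hc2, nu_scale, smul_smul, smul_smul]
  congr 1
  field_simp


lemma trace_conj (g : GL (Fin 2) F) (X : M2 F) :
    Matrix.trace ((g : M2 F) * X * (↑g⁻¹ : M2 F)) = Matrix.trace X := by
  rw [Matrix.trace_mul_comm, ← mul_assoc]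
  norm_cast
  rw [inv_mul_cancel]
  simp

lemma conj_eq_zero_iff (g : GL (Fin 2) F) (X : M2 F) :
    (g : M2 F) * X * (↑g⁻¹ : M2 F) = 0 ↔ X = 0 := by
  constructor
  · intro h
    rw [conj_iff, zero_mul] at h
    have h2 : (↑g⁻¹ : M2 F) * ((↑g : M2 F) * X) = 0 := by rw [h, mul_zero]
    rwa [← mul_assoc, Units.inv_mul, one_mul] at h2
  · intro h
    rw [h, mul_zero, zero_mul]

lemma conj_smul (g : GL (Fin 2) F) (c : F) (X : M2 F) :
    (g : M2 F) * (c • X) * (↑g⁻¹ : M2 F) = c • ((g : M2 F) * X * (↑g⁻¹ : M2 F)) := by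
  rw [mul_smul_comm, smul_mul_assoc]

lemma conj_mul (g : GL (Fin 2) F) (X Y : M2 F) :
    (g : M2 F) * (X * Y) * (↑g⁻¹ : M2 F)
      = ((g : M2 F) * X * (↑g⁻¹ : M2 F)) * ((g : M2 F) * Y * (↑g⁻¹ : M2 F)) := by
  have : (↑g⁻¹ : M2 F) * ((g : M2 F)) = 1 := by norm_cast; rw [inv_mul_cancel]; rfl
  calc (g : M2 F) * (X * Y) * (↑g⁻¹ : M2 F)
      = (g : M2 F) * (X * ((↑g⁻¹ : M2 F) * ↑g) * Y) * (↑g⁻¹ : M2 F) := by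
        rw [this, mul_one]
    _ = ((g : M2 F) * X * (↑g⁻¹ : M2 F)) * ((g : M2 F) * Y * (↑g⁻¹ : M2 F)) := by
        simp only [mul_assoc]

lemma ne_zero_of_trace_ne {X : M2 F} (h : Matrix.trace X ≠ 0) : X ≠ 0 := by
  intro h0
  rw [h0] at h
  simp at h

def Idx (F : Type*) [Field F] : Type _ :=
  Unit ⊕ ((F × F) ⊕ F ⊕ Unit) ⊕ ((Fˣ × (F ⊕ Fˣ)) ⊕ (Fˣ × F) ⊕ Fˣ) ⊕ (Fˣ × Fˣ × Fˣ)

def idx0 : Idx F := Sum.inl ()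
def idxA (a b : F) : Idx F := Sum.inr (Sum.inl (Sum.inl (a, b)))
def idxB (a : F) : Idx F := Sum.inr (Sum.inl (Sum.inr (Sum.inl a)))
def idxC : Idx F := Sum.inr (Sum.inl (Sum.inr (Sum.inr ())))
def idxD (s : Fˣ) (r : F) : Idx F := Sum.inr (Sum.inr (Sum.inl (Sum.inl (s, Sum.inl r))))
def idxE (s τ : Fˣ) : Idx F := Sum.inr (Sum.inr (Sum.inl (Sum.inl (s, Sum.inr τ))))
def idxF (s : Fˣ) (r : F) : Idx F := Sum.inr (Sum.inr (Sum.inl (Sum.inr (Sum.inl (s, r)))))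
def idxG (s : Fˣ) : Idx F := Sum.inr (Sum.inr (Sum.inl (Sum.inr (Sum.inr s))))
def idxH (a b c : Fˣ) : Idx F := Sum.inr (Sum.inr (Sum.inr (a, b, c)))

def mk3 (P Q R : M2 F) (hP : P*P = 0) (hQ : Q*Q = 0) (hR : R*R = 0) : NT F :=
  ⟨![P, Q, R], by
    intro i
    fin_cases i
    · show P^2 = 0; rw [pow_two]; exact hP
    · show Q^2 = 0; rw [pow_two]; exact hQ
    · show R^2 = 0; rw [pow_two]; exact hR⟩

noncomputable def rep : Idx F → NT F
  | Sum.inl _ => mk3 0 0 0 (by simp) (by simp) (by simp)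
  | Sum.inr (Sum.inl (Sum.inl (a, b))) =>
      mk3 (nu 1 0) (a • nu 1 0) (b • nu 1 0)
        (nu_mul_self 1 0) (nu_smul_sq a 1 0) (nu_smul_sq b 1 0)
  | Sum.inr (Sum.inl (Sum.inr (Sum.inl a))) =>
      mk3 0 (nu 1 0) (a • nu 1 0) (by simp) (nu_mul_self 1 0) (nu_smul_sq a 1 0)
  | Sum.inr (Sum.inl (Sum.inr (Sum.inr _))) =>
      mk3 0 0 (nu 1 0) (by simp) (by simp) (nu_mul_self 1 0)
  | Sum.inr (Sum.inr (Sum.inl (Sum.inl (s, Sum.inl r)))) =>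
      mk3 (nu 1 0) ((s : F) • nu 0 1) (r • nu 1 0)
        (nu_mul_self 1 0) (nu_smul_sq _ 0 1) (nu_smul_sq r 1 0)
  | Sum.inr (Sum.inr (Sum.inl (Sum.inl (s, Sum.inr t)))) =>
      mk3 (nu 1 0) ((s : F) • nu 0 1) ((t : F) • nu 0 1)
        (nu_mul_self 1 0) (nu_smul_sq _ 0 1) (nu_smul_sq _ 0 1)
  | Sum.inr (Sum.inr (Sum.inl (Sum.inr (Sum.inl (s, r))))) =>
      mk3 (nu 1 0) (r • nu 1 0) ((s : F) • nu 0 1)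
        (nu_mul_self 1 0) (nu_smul_sq r 1 0) (nu_smul_sq _ 0 1)
  | Sum.inr (Sum.inr (Sum.inl (Sum.inr (Sum.inr s)))) =>
      mk3 0 (nu 1 0) ((s : F) • nu 0 1) (by simp) (nu_mul_self 1 0) (nu_smul_sq _ 0 1)
  | Sum.inr (Sum.inr (Sum.inr (a, b, c))) =>
      mk3 ((a : F) • nu 1 0) ((b : F) • nu 0 1) ((c : F) • nu 1 1)
        (nu_smul_sq _ 1 0) (nu_smul_sq _ 0 1) (nu_smul_sq _ 1 1)

noncomputable def ind (A : NT F) : Idx F :=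
  if A.1 0 = 0 then
    if A.1 1 = 0 then
      if A.1 2 = 0 then idx0 else idxC
    else
      if A.1 1 * A.1 2 = 0 then idxB (ratio (A.1 1) (A.1 2))
      else idxG (uu (-(Matrix.trace (A.1 1 * A.1 2))))
  else
    if A.1 0 * A.1 1 = 0 then
      if A.1 0 * A.1 2 = 0 then idxA (ratio (A.1 0) (A.1 1)) (ratio (A.1 0) (A.1 2))
      else idxF (uu (-(Matrix.trace (A.1 0 * A.1 2)))) (ratio (A.1 0) (A.1 1))
    else
      if A.1 0 * A.1 2 = 0 then
        idxD (uu (-(Matrix.trace (A.1 0 * A.1 1)))) (ratio (A.1 0) (A.1 2))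
      else if A.1 1 * A.1 2 = 0 then
        idxE (uu (-(Matrix.trace (A.1 0 * A.1 1)))) (uu (-(Matrix.trace (A.1 0 * A.1 2))))
      else
        idxH (uu (Matrix.trace (A.1 0 * A.1 1) * Matrix.trace (A.1 0 * A.1 2)
                    / Matrix.trace (A.1 0 * A.1 1 * A.1 2)))
             (uu (-Matrix.trace (A.1 0 * A.1 1 * A.1 2) / Matrix.trace (A.1 0 * A.1 2)))
             (uu (-Matrix.trace (A.1 0 * A.1 1 * A.1 2) / Matrix.trace (A.1 0 * A.1 1)))


lemma mk3_val0 (P Q R : M2 F) (h1 h2 h3) : (mk3 P Q R h1 h2 h3).1 0 = P := rfl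
lemma mk3_val1 (P Q R : M2 F) (h1 h2 h3) : (mk3 P Q R h1 h2 h3).1 1 = Q := rfl
lemma mk3_val2 (P Q R : M2 F) (h1 h2 h3) : (mk3 P Q R h1 h2 h3).1 2 = R := rfl

lemma trace_smul_mul (a b : F) (P Q : M2 F) :
    Matrix.trace ((a•P)*(b•Q)) = a*b*Matrix.trace (P*Q) := by
  simp only [smul_mul_assoc, mul_smul_comm, Matrix.trace_smul, smul_eq_mul]
  ring

lemma trace_smul_mul3 (a b c : F) (P Q R : M2 F) :
    Matrix.trace ((a•P)*(b•Q)*(c•R)) = a*b*c*Matrix.trace (P*Q*R) := by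
  simp only [smul_mul_assoc, mul_smul_comm, Matrix.trace_smul, smul_eq_mul]
  ring

lemma n10_ne : (nu (1:F) 0) ≠ 0 := nu_ne_zero (by simp)

lemma smul_mul_smul_same (a b x y : F) : (a • nu x y) * (b • nu x y) = 0 := by
  rw [smul_mul_assoc, mul_smul_comm, nu_mul_self, smul_zero, smul_zero]

lemma smul_mul_smul_ne {a b : F} (ha : a ≠ 0) (hb : b ≠ 0) {x y x' y' : F}
    (hd : x*y' - y*x' ≠ 0) : (a • nu x y) * (b • nu x' y') ≠ 0 := by
  apply ne_zero_of_trace_ne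
  rw [trace_smul_mul, trace_nu_mul]
  intro h
  rcases mul_eq_zero.mp h with h' | h'
  · rcases mul_eq_zero.mp h' with h'' | h''
    · exact ha h''
    · exact hb h''
  · exact hd (pow_eq_zero_iff (two_ne_zero) |>.mp (neg_eq_zero.mp h'))

lemma ind_rep (i : Idx F) : ind (rep i) = i := by
  rcases i with ⟨⟩ | (⟨a,b⟩ | (a | ⟨⟩)) | ((⟨s, (r | t)⟩ | (⟨s,r⟩ | s)) | ⟨a,b,c⟩)
  · -- idx0
    simp only [rep, ind, mk3_val0, mk3_val1, mk3_val2, if_true]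
    rfl
  · -- idxA a b
    simp only [rep, ind, mk3_val0, mk3_val1, mk3_val2]
    erw [if_neg n10_ne]
    erw [if_pos (by rw [mul_smul_comm, nu_mul_self, smul_zero])]
    erw [if_pos (by rw [mul_smul_comm, nu_mul_self, smul_zero])]
    rw [ratio_eq n10_ne rfl, ratio_eq n10_ne rfl]
    rfl
  · -- idxB a
    simp only [rep, ind, mk3_val0, mk3_val1, mk3_val2, if_true]
    erw [if_neg n10_ne]
    erw [if_pos (by rw [mul_smul_comm, nu_mul_self, smul_zero])]
    rw [ratio_eq n10_ne rfl]
    rfl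
  · -- idxC
    simp only [rep, ind, mk3_val0, mk3_val1, mk3_val2, if_true]
    erw [if_neg n10_ne]
    rfl
  · -- idxD s r : (nu 1 0, s•nu 0 1, r•nu 1 0)
    simp only [rep, ind, mk3_val0, mk3_val1, mk3_val2]
    have h01 : nu (1:F) 0 * ((s:F) • nu 0 1) ≠ 0 := by
      have := smul_mul_smul_ne (a := (1:F)) (b := (s:F)) one_ne_zero s.ne_zero
        (x := 1) (y := 0) (x' := 0) (y' := 1) (by norm_num)
      simpa using this
    erw [if_neg n10_ne, if_neg h01]
    erw [if_pos (by rw [mul_smul_comm, nu_mul_self, smul_zero])]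
    have htr : -(Matrix.trace (nu (1:F) 0 * ((s:F) • nu 0 1))) = (s : F) := by
      rw [mul_smul_comm, Matrix.trace_smul, trace_nu_mul]
      simp
    rw [htr, uu_unit, ratio_eq n10_ne rfl]
    rfl
  · -- idxE s t : (nu 1 0, s•nu 0 1, t•nu 0 1)
    simp only [rep, ind, mk3_val0, mk3_val1, mk3_val2]
    have h01 : nu (1:F) 0 * ((s:F) • nu 0 1) ≠ 0 := by
      have := smul_mul_smul_ne (a := (1:F)) (b := (s:F)) one_ne_zero s.ne_zero
        (x := 1) (y := 0) (x' := 0) (y' := 1) (by norm_num)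
      simpa using this
    have h02 : nu (1:F) 0 * ((t:F) • nu 0 1) ≠ 0 := by
      have := smul_mul_smul_ne (a := (1:F)) (b := (t:F)) one_ne_zero t.ne_zero
        (x := 1) (y := 0) (x' := 0) (y' := 1) (by norm_num)
      simpa using this
    erw [if_neg n10_ne, if_neg h01, if_neg h02]
    erw [if_pos (smul_mul_smul_same _ _ _ _)]
    have htr1 : -(Matrix.trace (nu (1:F) 0 * ((s:F) • nu 0 1))) = (s : F) := by
      rw [mul_smul_comm, Matrix.trace_smul, trace_nu_mul]; simp
    have htr2 : -(Matrix.trace (nu (1:F) 0 * ((t:F) • nu 0 1))) = (t : F) := by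
      rw [mul_smul_comm, Matrix.trace_smul, trace_nu_mul]; simp
    rw [htr1, htr2, uu_unit, uu_unit]
    rfl
  · -- idxF s r : (nu 1 0, r•nu 1 0, s•nu 0 1)
    simp only [rep, ind, mk3_val0, mk3_val1, mk3_val2]
    have h02 : nu (1:F) 0 * ((s:F) • nu 0 1) ≠ 0 := by
      have := smul_mul_smul_ne (a := (1:F)) (b := (s:F)) one_ne_zero s.ne_zero
        (x := 1) (y := 0) (x' := 0) (y' := 1) (by norm_num)
      simpa using this
    erw [if_neg n10_ne]
    erw [if_pos (by rw [mul_smul_comm, nu_mul_self, smul_zero])]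
    erw [if_neg h02]
    have htr : -(Matrix.trace (nu (1:F) 0 * ((s:F) • nu 0 1))) = (s : F) := by
      rw [mul_smul_comm, Matrix.trace_smul, trace_nu_mul]; simp
    rw [htr, uu_unit, ratio_eq n10_ne rfl]
    rfl
  · -- idxG s : (0, nu 1 0, s•nu 0 1)
    simp only [rep, ind, mk3_val0, mk3_val1, mk3_val2, if_true]
    have h12 : nu (1:F) 0 * ((s:F) • nu 0 1) ≠ 0 := by
      have := smul_mul_smul_ne (a := (1:F)) (b := (s:F)) one_ne_zero s.ne_zero
        (x := 1) (y := 0) (x' := 0) (y' := 1) (by norm_num)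
      simpa using this
    erw [if_neg n10_ne, if_neg h12]
    have htr : -(Matrix.trace (nu (1:F) 0 * ((s:F) • nu 0 1))) = (s : F) := by
      rw [mul_smul_comm, Matrix.trace_smul, trace_nu_mul]; simp
    rw [htr, uu_unit]
    rfl
  · -- idxH a b c : (a•nu 1 0, b•nu 0 1, c•nu 1 1)
    simp only [rep, ind, mk3_val0, mk3_val1, mk3_val2]
    have h0 : (a:F) • nu (1:F) 0 ≠ 0 := smul_ne_zero a.ne_zero n10_ne
    have h01 : ((a:F) • nu (1:F) 0) * ((b:F) • nu 0 1) ≠ 0 :=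
      smul_mul_smul_ne a.ne_zero b.ne_zero (by norm_num)
    have h02 : ((a:F) • nu (1:F) 0) * ((c:F) • nu 1 1) ≠ 0 :=
      smul_mul_smul_ne a.ne_zero c.ne_zero (by norm_num)
    have h12 : ((b:F) • nu (0:F) 1) * ((c:F) • nu 1 1) ≠ 0 :=
      smul_mul_smul_ne b.ne_zero c.ne_zero (by norm_num)
    erw [if_neg h0, if_neg h01, if_neg h02, if_neg h12]
    have ht12 : Matrix.trace (((a:F) • nu (1:F) 0) * ((b:F) • nu 0 1)) = -((a:F)*(b:F)) := by
      rw [trace_smul_mul, trace_nu_mul]; ring_nf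
    have ht13 : Matrix.trace (((a:F) • nu (1:F) 0) * ((c:F) • nu 1 1)) = -((a:F)*(c:F)) := by
      rw [trace_smul_mul, trace_nu_mul]; ring_nf
    have ht123 : Matrix.trace (((a:F) • nu (1:F) 0) * ((b:F) • nu 0 1) * ((c:F) • nu 1 1))
        = (a:F)*(b:F)*(c:F) := by
      rw [trace_smul_mul3, trace_nu_mul3]; ring_nf
    rw [ht12, ht13, ht123]
    have e1 : -((a:F)*(b:F)) * -((a:F)*(c:F)) / ((a:F)*(b:F)*(c:F)) = (a:F) := by
      field_simp
    have e2 : -((a:F)*(b:F)*(c:F)) / -((a:F)*(c:F)) = (b:F) := by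
      field_simp
    have e3 : -((a:F)*(b:F)*(c:F)) / -((a:F)*(b:F)) = (c:F) := by
      rw [neg_div_neg_eq]
      field_simp
    rw [e1, e2, e3, uu_unit, uu_unit, uu_unit]
    rfl


lemma ind_inv {A B : NT F} (h : rel A B) : ind A = ind B := by
  obtain ⟨g, hg⟩ := h
  have hB : ∀ i, B.1 i = (g : M2 F) * A.1 i * (↑g⁻¹ : M2 F) := fun i => (hg i).symm
  have hz : ∀ i, (B.1 i = 0) ↔ (A.1 i = 0) := fun i => by
    rw [hB i]; exact conj_eq_zero_iff g (A.1 i)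
  have hprod : ∀ i j, B.1 i * B.1 j = (g : M2 F) * (A.1 i * A.1 j) * (↑g⁻¹ : M2 F) :=
    fun i j => by rw [hB i, hB j, conj_mul]
  have hpz : ∀ i j, (B.1 i * B.1 j = 0) ↔ (A.1 i * A.1 j = 0) := fun i j => by
    rw [hprod i j]; exact conj_eq_zero_iff g _
  have htr : ∀ i j, Matrix.trace (B.1 i * B.1 j) = Matrix.trace (A.1 i * A.1 j) :=
    fun i j => by rw [hprod i j, trace_conj]
  have htr3 : Matrix.trace (B.1 0 * B.1 1 * B.1 2)
      = Matrix.trace (A.1 0 * A.1 1 * A.1 2) := by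
    have : B.1 0 * B.1 1 * B.1 2
        = (g : M2 F) * (A.1 0 * A.1 1 * A.1 2) * (↑g⁻¹ : M2 F) := by
      rw [hprod 0 1, hB 2, ← conj_mul]
    rw [this, trace_conj]
  have sqA : ∀ i, A.1 i * A.1 i = 0 := fun i => by rw [← pow_two]; exact A.2 i
  have hre : ∀ i j, A.1 i ≠ 0 → A.1 i * A.1 j = 0 →
      ratio (B.1 i) (B.1 j) = ratio (A.1 i) (A.1 j) := by
    intro i j hi hij
    obtain ⟨c, hc⟩ := same_line_mult (sqA i) (sqA j) hi hij
    have hBc : B.1 j = c • B.1 i := by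
      rw [hB j, hB i, hc, conj_smul]
    have hBi : B.1 i ≠ 0 := fun hh => hi ((hz i).mp hh)
    rw [ratio_eq hBi hBc, ratio_eq hi hc]
  rw [ind, ind]
  by_cases h0 : A.1 0 = 0
  · rw [if_pos h0, if_pos ((hz 0).mpr h0)]
    by_cases h1 : A.1 1 = 0
    · rw [if_pos h1, if_pos ((hz 1).mpr h1)]
      by_cases h2 : A.1 2 = 0
      · rw [if_pos h2, if_pos ((hz 2).mpr h2)]
      · rw [if_neg h2, if_neg (fun hh => h2 ((hz 2).mp hh))]
    · rw [if_neg h1, if_neg (fun hh => h1 ((hz 1).mp hh))]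
      by_cases h12 : A.1 1 * A.1 2 = 0
      · rw [if_pos h12, if_pos ((hpz 1 2).mpr h12), hre 1 2 h1 h12]
      · rw [if_neg h12, if_neg (fun hh => h12 ((hpz 1 2).mp hh)), htr 1 2]
  · rw [if_neg h0, if_neg (fun hh => h0 ((hz 0).mp hh))]
    by_cases h01 : A.1 0 * A.1 1 = 0
    · rw [if_pos h01, if_pos ((hpz 0 1).mpr h01)]
      by_cases h02 : A.1 0 * A.1 2 = 0
      · rw [if_pos h02, if_pos ((hpz 0 2).mpr h02), hre 0 1 h0 h01, hre 0 2 h0 h02]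
      · rw [if_neg h02, if_neg (fun hh => h02 ((hpz 0 2).mp hh)), htr 0 2,
          hre 0 1 h0 h01]
    · rw [if_neg h01, if_neg (fun hh => h01 ((hpz 0 1).mp hh))]
      by_cases h02 : A.1 0 * A.1 2 = 0
      · rw [if_pos h02, if_pos ((hpz 0 2).mpr h02), htr 0 1, hre 0 2 h0 h02]
      · rw [if_neg h02, if_neg (fun hh => h02 ((hpz 0 2).mp hh))]
        by_cases h12 : A.1 1 * A.1 2 = 0
        · rw [if_pos h12, if_pos ((hpz 1 2).mpr h12), htr 0 1, htr 0 2]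
        · rw [if_neg h12, if_neg (fun hh => h12 ((hpz 1 2).mp hh)), htr 0 1, htr 0 2,
            htr3]


lemma nu_z0 (z : F) : nu z 0 = (z*z) • nu 1 0 := by
  have := nu_scale z 1 0
  simpa using this

lemma nu_0z (z : F) : nu 0 z = (z*z) • nu 0 1 := by
  have := nu_scale z 0 1
  simpa using this

lemma compl {x y : F} (hv : ¬(x = 0 ∧ y = 0)) : ∃ x' y' : F, x*y' - y*x' ≠ 0 := by
  by_cases hx : x = 0
  · have hy : y ≠ 0 := fun h => hv ⟨hx, h⟩
    exact ⟨1, 0, by simpa [hx] using hy⟩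
  · exact ⟨0, 1, by simpa using hx⟩

lemma prod_eq_zero_iff {s s' x y x' y' : F} (hs : s ≠ 0) (hs' : s' ≠ 0) :
    (s • nu x y) * (s' • nu x' y') = 0 ↔ x*y' - y*x' = 0 := by
  constructor
  · intro h
    by_contra hd
    exact smul_mul_smul_ne hs hs' hd h
  · intro hd
    rw [smul_mul_assoc, mul_smul_comm, nu_mul, hd, zero_smul, smul_zero, smul_zero]

lemma main2 (s x y x' y' : F) (hs : s ≠ 0) (hd : x*y' - y*x' ≠ 0) :
    ∃ g : GL (Fin 2) F,
      ((g : M2 F) * (s • nu x y) * (↑g⁻¹ : M2 F) = nu 1 0)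
      ∧ (∀ sc c : F, (g : M2 F) * (sc • nu (c*x) (c*y)) * (↑g⁻¹ : M2 F)
          = (sc*c^2/s) • nu 1 0)
      ∧ (∀ sc c : F, (g : M2 F) * (sc • nu (c*x') (c*y')) * (↑g⁻¹ : M2 F)
          = (sc*c^2*s*(x*y' - y*x')^2) • nu 0 1)
      ∧ (∀ sc : F, (g : M2 F) * (sc • nu x' y') * (↑g⁻¹ : M2 F)
          = (sc*s*(x*y' - y*x')^2) • nu 0 1) := by
  have hsd : s*(x*y' - y*x') ≠ 0 := mul_ne_zero hs hd
  set t : F := (s*(x*y' - y*x'))⁻¹ with ht'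
  have ht : t ≠ 0 := inv_ne_zero hsd
  have hdet : (t*y')*((1:F)*x) - (-(t*x'))*(-((1:F)*y)) ≠ 0 := by
    have h2 : (t*y')*((1:F)*x) - (-(t*x'))*(-((1:F)*y)) = t*(1:F)*(x*y' - y*x') := by ring
    rw [h2]
    exact mul_ne_zero (mul_ne_zero ht one_ne_zero) hd
  have hmain : ∀ sc c : F, (mkGL _ _ _ _ hdet : M2 F) * (sc • nu (c*x') (c*y')) * (↑(mkGL _ _ _ _ hdet)⁻¹ : M2 F)
      = (sc*c^2*s*(x*y' - y*x')^2) • nu 0 1 := by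
    intro sc c
    rw [conj_iff, mkGL_coe]
    have E := conj_main x y x' y' t 1 sc 0 c ht one_ne_zero
    simp only [zero_mul, zero_add, mul_zero, mul_one] at E
    rw [E, nu_0z, smul_smul]
    have h3 : (sc*(x*y' - y*x')/t) * (c*c) = sc*c^2*s*(x*y' - y*x')^2 := by
      rw [ht']
      field_simp
    rw [h3]
  refine ⟨mkGL _ _ _ _ hdet, ?_, ?_, hmain, ?_⟩
  case refine_2 =>
    intro sc c
    rw [conj_iff, mkGL_coe]
    have E := conj_main x y x' y' t 1 sc c 0 ht one_ne_zero
    simp only [zero_mul, add_zero, mul_zero] at E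
    rw [E, nu_z0, smul_smul]
    have h3 : (sc*(x*y' - y*x')/(t*1)) * ((c*t)*(c*t)) = sc*c^2/s := by
      rw [ht']
      field_simp
    rw [h3]
  case refine_1 =>
    rw [conj_iff, mkGL_coe]
    have E := conj_main x y x' y' t 1 s 1 0 ht one_ne_zero
    simp only [zero_mul, add_zero, mul_zero, one_mul] at E ⊢
    rw [E, nu_z0, smul_smul]
    have h3 : (s*(x*y' - y*x')/(t*1)) * (t*t) = 1 := by
      rw [ht']
      field_simp
    rw [h3, one_smul]
  case refine_3 =>
    intro sc
    have E := hmain sc 1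
    have hnu : nu ((1:F)*x') ((1:F)*y') = nu x' y' := by rw [one_mul, one_mul]
    rw [hnu] at E
    have h3 : sc*(1:F)^2*s*(x*y' - y*x')^2 = sc*s*(x*y' - y*x')^2 := by ring
    rw [h3] at E
    exact E


lemma main3 (s0 s1 s2 x0 y0 x1 y1 x2 y2 : F) (hs0 : s0 ≠ 0) (hs1 : s1 ≠ 0) (hs2 : s2 ≠ 0)
    (hd01 : x0*y1 - y0*x1 ≠ 0) (hd02 : x0*y2 - y0*x2 ≠ 0) (hd12 : x1*y2 - y1*x2 ≠ 0) :
    ∃ (g : GL (Fin 2) F) (α β γ : F), α ≠ 0 ∧ β ≠ 0 ∧ γ ≠ 0 ∧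
      (g : M2 F) * (s0 • nu x0 y0) * (↑g⁻¹ : M2 F) = α • nu 1 0 ∧
      (g : M2 F) * (s1 • nu x1 y1) * (↑g⁻¹ : M2 F) = β • nu 0 1 ∧
      (g : M2 F) * (s2 • nu x2 y2) * (↑g⁻¹ : M2 F) = γ • nu 1 1 := by
  set c1 : F := (x2*y1 - y2*x1)/(x0*y1 - y0*x1) with hc1'
  set c2 : F := (x0*y2 - y0*x2)/(x0*y1 - y0*x1) with hc2'
  have hc1 : c1 ≠ 0 := by
    rw [hc1']
    apply div_ne_zero _ hd01
    intro h
    apply hd12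
    linear_combination -h
  have hc2 : c2 ≠ 0 := div_ne_zero hd02 hd01
  have hx2 : c1*x0 + c2*x1 = x2 := by
    rw [hc1', hc2']
    rw [div_mul_eq_mul_div, div_mul_eq_mul_div, ← add_div, div_eq_iff hd01]
    ring
  have hy2 : c1*y0 + c2*y1 = y2 := by
    rw [hc1', hc2']
    rw [div_mul_eq_mul_div, div_mul_eq_mul_div, ← add_div, div_eq_iff hd01]
    ring
  set t : F := c1⁻¹ with ht'
  set u : F := c2⁻¹ with hu'
  have ht : t ≠ 0 := inv_ne_zero hc1
  have hu : u ≠ 0 := inv_ne_zero hc2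
  have hdet : (t*y1)*(u*x0) - (-(t*x1))*(-(u*y0)) ≠ 0 := by
    have h2 : (t*y1)*(u*x0) - (-(t*x1))*(-(u*y0)) = t*u*(x0*y1 - y0*x1) := by ring
    rw [h2]
    exact mul_ne_zero (mul_ne_zero ht hu) hd01
  refine ⟨mkGL _ _ _ _ hdet,
    (s0*(x0*y1 - y0*x1)/(t*u))*(t*t), (s1*(x0*y1 - y0*x1)/(t*u))*(u*u),
    s2*(x0*y1 - y0*x1)/(t*u), ?_, ?_, ?_, ?_, ?_, ?_⟩
  case refine_1 =>
    apply mul_ne_zero (div_ne_zero (mul_ne_zero hs0 hd01) (mul_ne_zero ht hu))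
    exact mul_ne_zero ht ht
  case refine_2 =>
    apply mul_ne_zero (div_ne_zero (mul_ne_zero hs1 hd01) (mul_ne_zero ht hu))
    exact mul_ne_zero hu hu
  case refine_3 =>
    exact div_ne_zero (mul_ne_zero hs2 hd01) (mul_ne_zero ht hu)
  case refine_4 =>
    rw [conj_iff, mkGL_coe]
    have E := conj_main x0 y0 x1 y1 t u s0 1 0 ht hu
    simp only [zero_mul, add_zero, mul_zero, one_mul] at E ⊢
    rw [E, nu_z0, smul_smul]
  case refine_5 =>
    rw [conj_iff, mkGL_coe]
    have E := conj_main x0 y0 x1 y1 t u s1 0 1 ht hu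
    simp only [zero_mul, zero_add, mul_zero, one_mul] at E ⊢
    rw [E, nu_0z, smul_smul]
  case refine_6 =>
    rw [conj_iff, mkGL_coe]
    have E := conj_main x0 y0 x1 y1 t u s2 c1 c2 ht hu
    rw [hx2, hy2] at E
    have e1 : c1*t = 1 := by rw [ht']; field_simp
    have e2 : c2*u = 1 := by rw [hu']; field_simp
    rw [e1, e2] at E
    exact E


lemma classify (A : NT F) : ∃ i : Idx F, rel A (rep i) := by
  have sqA : ∀ i, A.1 i * A.1 i = 0 := fun i => by rw [← pow_two]; exact A.2 i
  by_cases hz0 : A.1 0 = 0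
  · by_cases hz1 : A.1 1 = 0
    · by_cases hz2 : A.1 2 = 0
      · refine ⟨idx0, 1, ?_⟩
        intro j; fin_cases j
        · show ((1:GL (Fin 2) F) : M2 F) * A.1 0 * (↑(1:GL (Fin 2) F)⁻¹ : M2 F) = (0 : M2 F)
          rw [hz0]; simp
        · show ((1:GL (Fin 2) F) : M2 F) * A.1 1 * (↑(1:GL (Fin 2) F)⁻¹ : M2 F) = (0 : M2 F)
          rw [hz1]; simp
        · show ((1:GL (Fin 2) F) : M2 F) * A.1 2 * (↑(1:GL (Fin 2) F)⁻¹ : M2 F) = (0 : M2 F)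
          rw [hz2]; simp
      · obtain ⟨s,x,y,hs,hv,hA2⟩ := (nil_struct (sqA 2)).resolve_left hz2
        obtain ⟨x',y',hd⟩ := compl hv
        obtain ⟨g, g1, g2, g3, g4⟩ := main2 s x y x' y' hs hd
        refine ⟨idxC, g, ?_⟩
        intro j; fin_cases j
        · show (g : M2 F) * A.1 0 * (↑g⁻¹ : M2 F) = (0 : M2 F)
          rw [hz0]; simp
        · show (g : M2 F) * A.1 1 * (↑g⁻¹ : M2 F) = (0 : M2 F)
          rw [hz1]; simp
        · show (g : M2 F) * A.1 2 * (↑g⁻¹ : M2 F) = nu 1 0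
          rw [hA2]; exact g1
    · obtain ⟨s,x,y,hs,hv,hA1⟩ := (nil_struct (sqA 1)).resolve_left hz1
      by_cases hz2 : A.1 2 = 0
      · obtain ⟨x',y',hd⟩ := compl hv
        obtain ⟨g, g1, g2, g3, g4⟩ := main2 s x y x' y' hs hd
        refine ⟨idxB 0, g, ?_⟩
        intro j; fin_cases j
        · show (g : M2 F) * A.1 0 * (↑g⁻¹ : M2 F) = (0 : M2 F)
          rw [hz0]; simp
        · show (g : M2 F) * A.1 1 * (↑g⁻¹ : M2 F) = nu 1 0
          rw [hA1]; exact g1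
        · show (g : M2 F) * A.1 2 * (↑g⁻¹ : M2 F) = (0:F) • nu 1 0
          rw [hz2]; simp
      · obtain ⟨s2,x2,y2,hs2,hv2,hA2⟩ := (nil_struct (sqA 2)).resolve_left hz2
        by_cases hd12 : x*y2 - y*x2 = 0
        · obtain ⟨cc, hcx, hcy⟩ := dep hv hd12
          obtain ⟨x',y',hd⟩ := compl hv
          obtain ⟨g, g1, g2, g3, g4⟩ := main2 s x y x' y' hs hd
          refine ⟨idxB (s2*cc^2/s), g, ?_⟩
          intro j; fin_cases j
          · show (g : M2 F) * A.1 0 * (↑g⁻¹ : M2 F) = (0 : M2 F)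
            rw [hz0]; simp
          · show (g : M2 F) * A.1 1 * (↑g⁻¹ : M2 F) = nu 1 0
            rw [hA1]; exact g1
          · show (g : M2 F) * A.1 2 * (↑g⁻¹ : M2 F) = (s2*cc^2/s) • nu 1 0
            rw [hA2, hcx, hcy]; exact g2 s2 cc
        · obtain ⟨g, g1, g2, g3, g4⟩ := main2 s x y x2 y2 hs hd12
          have hne : s2*s*(x*y2 - y*x2)^2 ≠ 0 :=
            mul_ne_zero (mul_ne_zero hs2 hs) (pow_ne_zero 2 hd12)
          refine ⟨idxG (uu (s2*s*(x*y2 - y*x2)^2)), g, ?_⟩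
          intro j; fin_cases j
          · show (g : M2 F) * A.1 0 * (↑g⁻¹ : M2 F) = (0 : M2 F)
            rw [hz0]; simp
          · show (g : M2 F) * A.1 1 * (↑g⁻¹ : M2 F) = nu 1 0
            rw [hA1]; exact g1
          · show (g : M2 F) * A.1 2 * (↑g⁻¹ : M2 F)
                = ((uu (s2*s*(x*y2 - y*x2)^2) : Fˣ) : F) • nu 0 1
            rw [uu_coe hne, hA2]; exact g4 s2
  · obtain ⟨s0,x0,y0,hs0,hv0,hA0⟩ := (nil_struct (sqA 0)).resolve_left hz0
    have H1 : (∃ cc sc : F, A.1 1 = sc • nu (cc*x0) (cc*y0)) ∨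
        (∃ s1 x1 y1 : F, s1 ≠ 0 ∧ ¬(x1 = 0 ∧ y1 = 0) ∧ A.1 1 = s1 • nu x1 y1
          ∧ x0*y1 - y0*x1 ≠ 0) := by
      by_cases hz1 : A.1 1 = 0
      · exact Or.inl ⟨0, 0, by rw [hz1, zero_smul]⟩
      · obtain ⟨s1,x1,y1,hs1,hv1,hA1⟩ := (nil_struct (sqA 1)).resolve_left hz1
        by_cases hd01 : x0*y1 - y0*x1 = 0
        · obtain ⟨cc, hcx, hcy⟩ := dep hv0 hd01
          exact Or.inl ⟨cc, s1, by rw [hA1, hcx, hcy]⟩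
        · exact Or.inr ⟨s1, x1, y1, hs1, hv1, hA1, hd01⟩
    have H2 : (∃ cc sc : F, A.1 2 = sc • nu (cc*x0) (cc*y0)) ∨
        (∃ s2 x2 y2 : F, s2 ≠ 0 ∧ ¬(x2 = 0 ∧ y2 = 0) ∧ A.1 2 = s2 • nu x2 y2
          ∧ x0*y2 - y0*x2 ≠ 0) := by
      by_cases hz2 : A.1 2 = 0
      · exact Or.inl ⟨0, 0, by rw [hz2, zero_smul]⟩
      · obtain ⟨s2,x2,y2,hs2,hv2,hA2⟩ := (nil_struct (sqA 2)).resolve_left hz2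
        by_cases hd02 : x0*y2 - y0*x2 = 0
        · obtain ⟨cc, hcx, hcy⟩ := dep hv0 hd02
          exact Or.inl ⟨cc, s2, by rw [hA2, hcx, hcy]⟩
        · exact Or.inr ⟨s2, x2, y2, hs2, hv2, hA2, hd02⟩
    rcases H1 with ⟨cc1, sc1, hA1⟩ | ⟨s1, x1, y1, hs1, hv1, hA1, hd01⟩
    · rcases H2 with ⟨cc2, sc2, hA2⟩ | ⟨s2, x2, y2, hs2, hv2, hA2, hd02⟩
      · -- idxA
        obtain ⟨x',y',hd⟩ := compl hv0
        obtain ⟨g, g1, g2, g3, g4⟩ := main2 s0 x0 y0 x' y' hs0 hd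
        refine ⟨idxA (sc1*cc1^2/s0) (sc2*cc2^2/s0), g, ?_⟩
        intro j; fin_cases j
        · show (g : M2 F) * A.1 0 * (↑g⁻¹ : M2 F) = nu 1 0
          rw [hA0]; exact g1
        · show (g : M2 F) * A.1 1 * (↑g⁻¹ : M2 F) = (sc1*cc1^2/s0) • nu 1 0
          rw [hA1]; exact g2 sc1 cc1
        · show (g : M2 F) * A.1 2 * (↑g⁻¹ : M2 F) = (sc2*cc2^2/s0) • nu 1 0
          rw [hA2]; exact g2 sc2 cc2
      · -- idxF
        obtain ⟨g, g1, g2, g3, g4⟩ := main2 s0 x0 y0 x2 y2 hs0 hd02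
        have hne : s2*s0*(x0*y2 - y0*x2)^2 ≠ 0 :=
          mul_ne_zero (mul_ne_zero hs2 hs0) (pow_ne_zero 2 hd02)
        refine ⟨idxF (uu (s2*s0*(x0*y2 - y0*x2)^2)) (sc1*cc1^2/s0), g, ?_⟩
        intro j; fin_cases j
        · show (g : M2 F) * A.1 0 * (↑g⁻¹ : M2 F) = nu 1 0
          rw [hA0]; exact g1
        · show (g : M2 F) * A.1 1 * (↑g⁻¹ : M2 F) = (sc1*cc1^2/s0) • nu 1 0
          rw [hA1]; exact g2 sc1 cc1
        · show (g : M2 F) * A.1 2 * (↑g⁻¹ : M2 F)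
              = ((uu (s2*s0*(x0*y2 - y0*x2)^2) : Fˣ) : F) • nu 0 1
          rw [uu_coe hne, hA2]; exact g4 s2
    · -- A1 independent from A0
      have hne1 : s1*s0*(x0*y1 - y0*x1)^2 ≠ 0 :=
        mul_ne_zero (mul_ne_zero hs1 hs0) (pow_ne_zero 2 hd01)
      by_cases hz2 : A.1 2 = 0
      · obtain ⟨g, g1, g2, g3, g4⟩ := main2 s0 x0 y0 x1 y1 hs0 hd01
        refine ⟨idxD (uu (s1*s0*(x0*y1 - y0*x1)^2)) 0, g, ?_⟩
        intro j; fin_cases j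
        · show (g : M2 F) * A.1 0 * (↑g⁻¹ : M2 F) = nu 1 0
          rw [hA0]; exact g1
        · show (g : M2 F) * A.1 1 * (↑g⁻¹ : M2 F)
              = ((uu (s1*s0*(x0*y1 - y0*x1)^2) : Fˣ) : F) • nu 0 1
          rw [uu_coe hne1, hA1]; exact g4 s1
        · show (g : M2 F) * A.1 2 * (↑g⁻¹ : M2 F) = (0:F) • nu 1 0
          rw [hz2]; simp
      · obtain ⟨s2,x2,y2,hs2,hv2,hA2⟩ := (nil_struct (sqA 2)).resolve_left hz2
        by_cases hd02 : x0*y2 - y0*x2 = 0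
        · obtain ⟨cc, hcx, hcy⟩ := dep hv0 hd02
          obtain ⟨g, g1, g2, g3, g4⟩ := main2 s0 x0 y0 x1 y1 hs0 hd01
          refine ⟨idxD (uu (s1*s0*(x0*y1 - y0*x1)^2)) (s2*cc^2/s0), g, ?_⟩
          intro j; fin_cases j
          · show (g : M2 F) * A.1 0 * (↑g⁻¹ : M2 F) = nu 1 0
            rw [hA0]; exact g1
          · show (g : M2 F) * A.1 1 * (↑g⁻¹ : M2 F)
                = ((uu (s1*s0*(x0*y1 - y0*x1)^2) : Fˣ) : F) • nu 0 1
            rw [uu_coe hne1, hA1]; exact g4 s1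
          · show (g : M2 F) * A.1 2 * (↑g⁻¹ : M2 F) = (s2*cc^2/s0) • nu 1 0
            rw [hA2, hcx, hcy]; exact g2 s2 cc
        · by_cases hd12 : x1*y2 - y1*x2 = 0
          · obtain ⟨cc, hcx, hcy⟩ := dep hv1 hd12
            have hcc : cc ≠ 0 := by
              intro h
              apply hv2
              rw [h] at hcx hcy
              simp at hcx hcy
              exact ⟨hcx, hcy⟩
            obtain ⟨g, g1, g2, g3, g4⟩ := main2 s0 x0 y0 x1 y1 hs0 hd01
            have hne2 : s2*cc^2*s0*(x0*y1 - y0*x1)^2 ≠ 0 :=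
              mul_ne_zero (mul_ne_zero (mul_ne_zero hs2 (pow_ne_zero 2 hcc)) hs0)
                (pow_ne_zero 2 hd01)
            refine ⟨idxE (uu (s1*s0*(x0*y1 - y0*x1)^2))
              (uu (s2*cc^2*s0*(x0*y1 - y0*x1)^2)), g, ?_⟩
            intro j; fin_cases j
            · show (g : M2 F) * A.1 0 * (↑g⁻¹ : M2 F) = nu 1 0
              rw [hA0]; exact g1
            · show (g : M2 F) * A.1 1 * (↑g⁻¹ : M2 F)
                  = ((uu (s1*s0*(x0*y1 - y0*x1)^2) : Fˣ) : F) • nu 0 1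
              rw [uu_coe hne1, hA1]; exact g4 s1
            · show (g : M2 F) * A.1 2 * (↑g⁻¹ : M2 F)
                  = ((uu (s2*cc^2*s0*(x0*y1 - y0*x1)^2) : Fˣ) : F) • nu 0 1
              rw [uu_coe hne2, hA2, hcx, hcy]; exact g3 s2 cc
          · obtain ⟨g, α, β, γ, hα, hβ, hγ, e0, e1, e2⟩ :=
              main3 s0 s1 s2 x0 y0 x1 y1 x2 y2 hs0 hs1 hs2 hd01 hd02 hd12
            refine ⟨idxH (uu α) (uu β) (uu γ), g, ?_⟩
            intro j; fin_cases j
            · show (g : M2 F) * A.1 0 * (↑g⁻¹ : M2 F) = ((uu α : Fˣ) : F) • nu 1 0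
              rw [uu_coe hα, hA0]; exact e0
            · show (g : M2 F) * A.1 1 * (↑g⁻¹ : M2 F) = ((uu β : Fˣ) : F) • nu 0 1
              rw [uu_coe hβ, hA1]; exact e1
            · show (g : M2 F) * A.1 2 * (↑g⁻¹ : M2 F) = ((uu γ : Fˣ) : F) • nu 1 1
              rw [uu_coe hγ, hA2]; exact e2


lemma card_idx [Fintype F] (q : ℕ) (hq : Fintype.card F = q) :
    Nat.card (Idx F) = q^3 + q^2 + q + 1 := by
  have hqF : Nat.card F = q := by rw [Nat.card_eq_fintype_card, hq]
  have hu : q = Nat.card Fˣ + 1 := by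
    rw [← hqF]; exact Nat.card_eq_card_units_add_one F
  show Nat.card (Unit ⊕ ((F × F) ⊕ F ⊕ Unit)
    ⊕ ((Fˣ × (F ⊕ Fˣ)) ⊕ (Fˣ × F) ⊕ Fˣ) ⊕ (Fˣ × Fˣ × Fˣ)) = q^3 + q^2 + q + 1
  simp only [Nat.card_sum, Nat.card_prod, Nat.card_unique, hqF]
  rw [hu]
  ring

theorem card_quot [Fintype F] (q : ℕ) (hq : Fintype.card F = q) :
    Nat.card (Quot (rel (F := F))) = q^3 + q^2 + q + 1 := by
  have hbij : Function.Bijective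
      (Quot.lift ind (fun A B h => ind_inv h) : Quot (rel (F := F)) → Idx F) := by
    constructor
    · intro qa qb
      induction qa using Quot.ind with | _ A =>
      induction qb using Quot.ind with | _ B =>
      intro h
      have hAB : ind A = ind B := h
      obtain ⟨iA, hA⟩ := classify A
      obtain ⟨iB, hB⟩ := classify B
      have hiA : iA = ind A := by rw [ind_inv hA, ind_rep]
      have hiB : iB = ind B := by rw [ind_inv hB, ind_rep]
      have : iA = iB := by rw [hiA, hiB, hAB]
      apply Quot.sound
      exact rel_trans hA (this ▸ rel_symm hB)
    · intro i
      exact ⟨Quot.mk _ (rep i), ind_rep i⟩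
  rw [Nat.card_eq_of_bijective _ hbij]
  exact card_idx q hq

end Stmt9

theorem stmt_9 (F : Type*) [Field F] [Fintype F] (q : ℕ) (hq : Fintype.card F = q) :
    Nat.card (Quot (fun A B : {A : Fin 3 → Matrix (Fin 2) (Fin 2) F // ∀ i, A i ^ 2 = 0} =>
        ∃ g : GL (Fin 2) F, ∀ i,
          (g : Matrix (Fin 2) (Fin 2) F) * A.1 i * (↑g⁻¹ : Matrix (Fin 2) (Fin 2) F) = B.1 i))
      = q ^ 3 + q ^ 2 + q + 1 := by
  exact Stmt9.card_quot q hq
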